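/- Let A and B be connected subsets of a tree T with ∂A = ∂B ≠ ∅ (boundaries of ends). Then A ∩ B ≠ ∅, and every connected component of the symmetric difference A △ B is finite. -/

import Mathlib

/-! A rooted locally finite tree encoded by a branching function `c : List ℕ → ℕ`,
its end compactification, and the boundary `∂A` of a vertex set `A`. -/

def vertexOK (c : List ℕ → ℕ) (l : List ℕ) : Prop :=
  ∀ (p : List ℕ) (k : ℕ), (p ++ [k]) <+: l → k < c p

def endOK (c : List ℕ → ℕ) (f : ℕ → ℕ) : Prop :=
  ∀ n : ℕ, vertexOK c (List.ofFn fun i : Fin n => f i)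

def Vtx (c : List ℕ → ℕ) := {l : List ℕ // vertexOK c l}

def Ends (c : List ℕ → ℕ) := {f : ℕ → ℕ // endOK c f}

/-- The end compactification `T̂ = T ∪ ∂T` as a type. -/
def Comp (c : List ℕ → ℕ) := Vtx c ⊕ Ends c

def vtxIncl (c : List ℕ → ℕ) : Vtx c → Comp c := Sum.inl

def endIncl (c : List ℕ → ℕ) : Ends c → Comp c := Sum.inr

/-- `T̂_v`: the points of the compactification extending the vertex `v`. -/
def hatT (c : List ℕ → ℕ) (v : Vtx c) : Set (Comp c) :=
  {z | Sum.elim (fun w : Vtx c => v.1 <+: w.1)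
      (fun f : Ends c => List.ofFn (fun i : Fin v.1.length => f.1 i) = v.1) z}

/-- The topology of the end compactification. -/
instance compTopology (c : List ℕ → ℕ) : TopologicalSpace (Comp c) :=
  TopologicalSpace.generateFrom
    ({s | ∃ v : Vtx c, s = {vtxIncl c v}} ∪ {s | ∃ v : Vtx c, s = hatT c v})

/-- The boundary `∂A ⊆ ∂T` of a set of vertices `A`: the ends lying in the closure
of `A` in the end compactification. -/
def bdry (c : List ℕ → ℕ) (A : Set (Vtx c)) : Set (Ends c) :=
  {f | endIncl c f ∈ closure (vtxIncl c '' A)}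

/-- The tree as a simple graph on its vertices: adjacency is the parent-child relation. -/
def treeGraph (c : List ℕ → ℕ) : SimpleGraph (Vtx c) where
  Adj v w := (∃ k, w.1 = v.1 ++ [k]) ∨ (∃ k, v.1 = w.1 ++ [k])
  symm := by
    constructor
    intro v w h
    exact h.symm
  loopless := by
    constructor
    intro v h
    rcases h with ⟨k, hk⟩ | ⟨k, hk⟩ <;>
    · have := congrArg List.length hk
      simp at this



section Helpers

variable {c : List ℕ → ℕ}

lemma vertexOK_prefix {l p : List ℕ} (h : vertexOK c l) (hp : p <+: l) : vertexOK c p :=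
  fun q k hq => h q k (hq.trans hp)

/-- The list of the first `n` values of an end. -/
def fnL (f : Ends c) (n : ℕ) : List ℕ := List.ofFn fun i : Fin n => f.1 i

/-- The vertex given by the first `n` values of an end. -/
def fnV (f : Ends c) (n : ℕ) : Vtx c := ⟨fnL f n, f.2 n⟩

lemma length_fnL (f : Ends c) (n : ℕ) : (fnL f n).length = n := by simp [fnL]

lemma take_ofFn (g : ℕ → ℕ) {m n : ℕ} (h : m ≤ n) :
    (List.ofFn fun i : Fin n => g i).take m = List.ofFn fun i : Fin m => g i := by
  apply List.ext_getElem
  · simp [h]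
  · intro i h1 h2
    simp [List.getElem_take, List.getElem_ofFn]

lemma fnL_prefix (f : Ends c) {m n : ℕ} (h : m ≤ n) : fnL f m <+: fnL f n := by
  rw [fnL, fnL, ← take_ofFn _ h]
  exact List.take_prefix _ _

lemma childOK {l : List ℕ} (h : vertexOK c l) {k : ℕ} (hk : k < c l) :
    vertexOK c (l ++ [k]) := by
  intro q j hq
  rcases List.prefix_concat_iff.mp hq with h1 | h1
  · obtain ⟨h2, h3⟩ := List.append_inj' h1 rfl
    obtain rfl : j = k := by simpa using h3
    exact h2 ▸ hk
  · exact h q j h1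

lemma level_finite (c : List ℕ → ℕ) (n : ℕ) : {v : Vtx c | v.1.length = n}.Finite := by
  induction n with
  | zero =>
    apply Set.Subsingleton.finite
    intro a ha b hb
    exact Subtype.ext (by rw [List.length_eq_zero_iff.mp ha, List.length_eq_zero_iff.mp hb])
  | succ n ih =>
    have hsub : {v : Vtx c | v.1.length = n + 1} ⊆
        ⋃ p ∈ {v : Vtx c | v.1.length = n}, {w : Vtx c | ∃ k, w.1 = p.1 ++ [k]} := by
      intro v hv
      have hv' : v.1.length = n + 1 := hv
      have hne : v.1 ≠ [] := by
        intro h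
        rw [h] at hv'
        simp at hv'
      have hp : (⟨v.1.dropLast, vertexOK_prefix v.2 (List.dropLast_prefix _)⟩ : Vtx c) ∈
          {v : Vtx c | v.1.length = n} := by
        show v.1.dropLast.length = n
        rw [List.length_dropLast, hv']
        omega
      exact Set.mem_biUnion hp ⟨v.1.getLast hne, (List.dropLast_append_getLast hne).symm⟩
    refine Set.Finite.subset (Set.Finite.biUnion ih (fun p _ => ?_)) hsub
    have hr : {w : Vtx c | ∃ k, w.1 = p.1 ++ [k]} ⊆
        Set.range (fun k : Fin (c p.1) => (⟨p.1 ++ [k.1], childOK p.2 k.2⟩ : Vtx c)) := by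
      rintro w ⟨k, hk⟩
      have hkc : k < c p.1 := w.2 p.1 k (by rw [hk])
      exact ⟨⟨k, hkc⟩, Subtype.ext hk.symm⟩
    exact (Set.finite_range _).subset hr

lemma len_le_finite (c : List ℕ → ℕ) (L : ℕ) : {v : Vtx c | v.1.length ≤ L}.Finite := by
  have hsub : {v : Vtx c | v.1.length ≤ L} ⊆
      ⋃ n ∈ Set.Iic L, {v : Vtx c | v.1.length = n} :=
    fun v hv => Set.mem_biUnion hv rfl
  exact (((Set.finite_Iic L)).biUnion fun n _ => level_finite c n).subset hsub

lemma pigeon {α β : Type*} {s : Set α} (hs : s.Infinite) (f : α → β) {t : Set β}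
    (ht : t.Finite) (hmap : ∀ a ∈ s, f a ∈ t) : ∃ b, {a ∈ s | f a = b}.Infinite := by
  by_contra h
  push_neg at h
  have hsub : s ⊆ ⋃ b ∈ t, {a ∈ s | f a = b} :=
    fun a ha => Set.mem_biUnion (hmap a ha) ⟨ha, rfl⟩
  exact hs ((ht.biUnion fun b _ => h b).subset hsub)

/-- Separation: a walk from `x` to `y` passes through every prefix `v` of `y`
that is not a prefix of `x`. -/
lemma sep (v : Vtx c) : ∀ {x y : Vtx c} (W : (treeGraph c).Walk x y),
    ¬ v.1 <+: x.1 → v.1 <+: y.1 → v ∈ W.support := by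
  intro x y W
  induction W with
  | nil =>
    intro h1 h2
    exact absurd h2 h1
  | @cons a b y' hab W ih =>
    intro h1 h2
    by_cases hb : v.1 <+: b.1
    · rcases hab with ⟨k, hk⟩ | ⟨k, hk⟩
      · rcases List.prefix_concat_iff.mp (hk ▸ hb) with h | h
        · have hvb : v = b := Subtype.ext (by rw [h, ← hk])
          show v ∈ a :: W.support
          exact List.mem_cons_of_mem _ (hvb ▸ W.start_mem_support)
        · exact absurd h h1
      · exact absurd (hb.trans ⟨[k], hk.symm⟩) h1
    · show v ∈ a :: W.support
      exact List.mem_cons_of_mem _ (ih hb h2)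

lemma mem_reach {s : Set (Vtx c)} {x y v : Vtx c} (hx : x ∈ s) (hy : y ∈ s)
    (h : ((treeGraph c).induce s).Reachable ⟨x, hx⟩ ⟨y, hy⟩)
    (h1 : ¬ v.1 <+: x.1) (h2 : v.1 <+: y.1) :
    ∃ hv : v ∈ s, ((treeGraph c).induce s).Reachable ⟨x, hx⟩ ⟨v, hv⟩ := by
  classical
  obtain ⟨W⟩ := h
  have hW : v ∈ (W.map (SimpleGraph.Embedding.induce s).toHom).support :=
    sep v _ h1 h2
  rw [SimpleGraph.Walk.support_map, List.mem_map] at hW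
  obtain ⟨u, hu, huv⟩ := hW
  have hv : v ∈ s := huv ▸ u.2
  refine ⟨hv, ?_⟩
  have huu : u = ⟨v, hv⟩ := Subtype.ext huv
  exact huu ▸ ⟨W.takeUntil u hu⟩

lemma connA {s : Set (Vtx c)} (hs : ((treeGraph c).induce s).Connected)
    {a0 a v : Vtx c} (ha0 : a0 ∈ s) (ha : a ∈ s)
    (h1 : ¬ v.1 <+: a0.1) (h2 : v.1 <+: a.1) : v ∈ s :=
  (mem_reach ha0 ha (hs.preconnected _ _) h1 h2).1

lemma isOpen_hatT (v : Vtx c) : IsOpen (hatT c v) :=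
  TopologicalSpace.isOpen_generateFrom_of_mem (Or.inr ⟨v, rfl⟩)

lemma hatT_anti {v w : Vtx c} (h : v.1 <+: w.1) : hatT c w ⊆ hatT c v := by
  intro z hz
  rcases z with a | e
  · exact h.trans hz
  · show (List.ofFn fun i : Fin v.1.length => e.1 i) = v.1
    have hz' : (List.ofFn fun i : Fin w.1.length => e.1 i) = w.1 := hz
    have h1 : v.1 = w.1.take v.1.length := List.prefix_iff_eq_take.mp h
    calc (List.ofFn fun i : Fin v.1.length => e.1 i)
        = (List.ofFn fun i : Fin w.1.length => e.1 i).take v.1.length :=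
          (take_ofFn _ h.length_le).symm
      _ = w.1.take v.1.length := by rw [hz']
      _ = v.1 := h1.symm

lemma end_mem_hatT_fnV (f : Ends c) (n : ℕ) : endIncl c f ∈ hatT c (fnV f n) := by
  show (List.ofFn fun i : Fin (fnL f n).length => f.1 i) = fnL f n
  apply List.ext_getElem
  · simp [fnL]
  · intro i h1 h2
    simp [fnL, List.getElem_ofFn]

lemma exists_basis {f : Ends c} {o : Set (Comp c)} (ho : IsOpen o) (hf : endIncl c f ∈ o) :
    ∃ n, hatT c (fnV f n) ⊆ o := by
  have ho' : TopologicalSpace.GenerateOpen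
      ({s | ∃ v : Vtx c, s = {vtxIncl c v}} ∪ {s | ∃ v : Vtx c, s = hatT c v}) o := ho
  clear ho
  induction ho' with
  | @basic s hs =>
    rcases hs with ⟨v, rfl⟩ | ⟨v, rfl⟩
    · exfalso
      have : endIncl c f = vtxIncl c v := hf
      simp [endIncl, vtxIncl] at this
    · refine ⟨v.1.length, ?_⟩
      have hfv : fnV f v.1.length = v := Subtype.ext hf
      rw [hfv]
  | univ => exact ⟨0, fun _ _ => trivial⟩
  | @inter s t _ _ ihs iht =>
    obtain ⟨n, hn⟩ := ihs hf.1
    obtain ⟨m, hm⟩ := iht hf.2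
    refine ⟨max n m, fun z hz => ⟨hn (hatT_anti (fnL_prefix f (le_max_left n m)) hz),
      hm (hatT_anti (fnL_prefix f (le_max_right n m)) hz)⟩⟩
  | @sUnion S hS ih =>
    obtain ⟨s, hsS, hfs⟩ := hf
    obtain ⟨n, hn⟩ := ih s hsS hfs
    exact ⟨n, hn.trans (Set.subset_sUnion_of_mem hsS)⟩

lemma mem_bdry_iff {A : Set (Vtx c)} {f : Ends c} :
    f ∈ bdry c A ↔ ∀ n, ∃ w ∈ A, fnL f n <+: w.1 := by
  constructor
  · intro hf n
    have hcl : endIncl c f ∈ closure (vtxIncl c '' A) := hf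
    obtain ⟨z, hz1, w, hw, rfl⟩ :=
      mem_closure_iff.mp hcl (hatT c (fnV f n)) (isOpen_hatT _) (end_mem_hatT_fnV f n)
    exact ⟨w, hw, hz1⟩
  · intro h
    show endIncl c f ∈ closure (vtxIncl c '' A)
    apply mem_closure_iff.mpr
    intro o ho hfo
    obtain ⟨n, hn⟩ := exists_basis ho hfo
    obtain ⟨w, hw, hpre⟩ := h n
    exact ⟨vtxIncl c w, hn hpre, ⟨w, hw, rfl⟩⟩

lemma side {A : Set (Vtx c)} (hA : ((treeGraph c).induce A).Connected)
    {a0 : Vtx c} (ha0 : a0 ∈ A) {f : Ends c} (hf : ∀ n, ∃ w ∈ A, fnL f n <+: w.1)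
    (N : ℕ) (hN : a0.1.length < N) : fnV f N ∈ A := by
  obtain ⟨a, ha, hpa⟩ := hf N
  refine connA hA ha0 ha ?_ hpa
  intro hp
  have h1 := hp.length_le
  rw [show (fnV f N).1.length = N from length_fnL f N] at h1
  omega

lemma chain_exists {α : Type*} (Inv : α → Prop) (len : α → ℕ) (R : α → α → Prop)
    (p0 : α) (h0 : Inv p0)
    (hstep : ∀ p, Inv p → ∃ q, Inv q ∧ R p q ∧ len q = len p + 1) :
    ∃ u : ℕ → α, u 0 = p0 ∧
      ∀ n, Inv (u n) ∧ R (u n) (u (n + 1)) ∧ len (u (n + 1)) = len (u n) + 1 := by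
  choose F hF1 hF2 hF3 using hstep
  let u : ℕ → {p : α // Inv p} := fun n =>
    Nat.rec ⟨p0, h0⟩ (fun _ q => ⟨F q.1 q.2, hF1 q.1 q.2⟩) n
  exact ⟨fun n => (u n).1, rfl, fun n => ⟨(u n).2, hF2 (u n).1 (u n).2, hF3 (u n).1 (u n).2⟩⟩

end Helpers

/-- If `A` and `B` are connected subsets of a (locally finite) tree with
`∂A = ∂B ≠ ∅`, then `A ∩ B ≠ ∅` and every connected component of the symmetric
difference `A △ B` is finite. -/
theorem stmt17 (c : List ℕ → ℕ) (A B : Set (Vtx c))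
    (hA : ((treeGraph c).induce A).Connected)
    (hB : ((treeGraph c).induce B).Connected)
    (hbd : bdry c A = bdry c B) (hne : (bdry c A).Nonempty) :
    (A ∩ B).Nonempty ∧
      ∀ (x : Vtx c) (hx : x ∈ symmDiff A B),
        {y : Vtx c | ∃ hy : y ∈ symmDiff A B,
          ((treeGraph c).induce (symmDiff A B)).Reachable ⟨x, hx⟩ ⟨y, hy⟩}.Finite := by
  classical
  constructor
  · -- Part 1: `A ∩ B` is nonempty.
    obtain ⟨f, hf⟩ := hne
    have hfA := mem_bdry_iff.mp hf
    have hfB := mem_bdry_iff.mp (hbd ▸ hf)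
    obtain ⟨a0, ha0, -⟩ := hfA 0
    obtain ⟨b0, hb0, -⟩ := hfB 0
    refine ⟨fnV f (max a0.1.length b0.1.length + 1),
      side hA ha0 hfA _ (by omega), side hB hb0 hfB _ (by omega)⟩
  · -- Part 2: components of the symmetric difference are finite.
    intro x hx
    rw [← Set.not_infinite]
    intro hC
    set C : Set (Vtx c) := {y : Vtx c | ∃ hy : y ∈ symmDiff A B,
      ((treeGraph c).induce (symmDiff A B)).Reachable ⟨x, hx⟩ ⟨y, hy⟩} with hCdef
    have hCsub : C ⊆ symmDiff A B := fun y hy => hy.1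
    -- prefixes (longer than `x`) of elements of `C` are again in `C`
    have hpref : ∀ y ∈ C, ∀ v : Vtx c, x.1.length < v.1.length → v.1 <+: y.1 → v ∈ C := by
      intro y hy v hlen hpre
      obtain ⟨hys, hreach⟩ := hy
      have h1 : ¬ v.1 <+: x.1 := fun h => by have := h.length_le; omega
      obtain ⟨hv, hr⟩ := mem_reach hx hys hreach h1 hpre
      exact ⟨hv, hr⟩
    -- the invariant for the recursive construction of a ray inside `C`
    set Inv : Vtx c → Prop := fun p =>
      p ∈ C ∧ x.1.length < p.1.length ∧ {y ∈ C | p.1 <+: y.1}.Infinite with hInv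
    set L : ℕ := x.1.length + 1 with hL
    have base : ∃ p0 : Vtx c, Inv p0 := by
      have hC' : (C \ {v : Vtx c | v.1.length ≤ x.1.length}).Infinite :=
        hC.diff (len_le_finite c x.1.length)
      obtain ⟨p, hp⟩ := pigeon hC'
        (fun y : Vtx c => (⟨y.1.take L, vertexOK_prefix y.2 (List.take_prefix _ _)⟩ : Vtx c))
        (len_le_finite c L) (fun a _ => by
          show (a.1.take L).length ≤ L
          simp [List.length_take])
      obtain ⟨y0, ⟨⟨hy0C, hy0l⟩, hy0p⟩⟩ := hp.nonempty
      have hy0len : L ≤ y0.1.length := by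
        simp only [Set.mem_setOf_eq, not_le] at hy0l
        omega
      have hppre : ∀ y : Vtx c,
          (⟨y.1.take L, vertexOK_prefix y.2 (List.take_prefix _ _)⟩ : Vtx c) = p →
          p.1 <+: y.1 := by
        intro y h
        rw [← congrArg Subtype.val h]
        exact List.take_prefix _ _
      have hplen : p.1.length = L := by
        rw [← congrArg Subtype.val hy0p]
        simp [List.length_take]
        omega
      refine ⟨p, hpref y0 hy0C p (by omega) (hppre y0 hy0p), by omega, ?_⟩
      refine Set.Infinite.mono ?_ hp
      rintro a ⟨⟨haC, -⟩, hap⟩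
      exact ⟨haC, hppre a hap⟩
    have step : ∀ p : Vtx c, Inv p → ∃ q : Vtx c, Inv q ∧
        p.1 <+: q.1 ∧ q.1.length = p.1.length + 1 := by
      rintro p ⟨hpC, hplen, hpinf⟩
      set m := p.1.length with hm
      have hS' : ({y ∈ C | p.1 <+: y.1} \ {p}).Infinite :=
        hpinf.diff (Set.finite_singleton p)
      obtain ⟨q, hq⟩ := pigeon hS'
        (fun y : Vtx c => (⟨y.1.take (m + 1), vertexOK_prefix y.2 (List.take_prefix _ _)⟩ : Vtx c))
        (len_le_finite c (m + 1)) (fun a _ => by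
          show (a.1.take (m + 1)).length ≤ m + 1
          simp [List.length_take])
      obtain ⟨y0, ⟨⟨⟨hy0C, hy0p⟩, hy0ne⟩, hy0q⟩⟩ := hq.nonempty
      have hy0len : m + 1 ≤ y0.1.length := by
        have h1 := hy0p.length_le
        rcases eq_or_lt_of_le h1 with h2 | h2
        · exact absurd (Subtype.ext (hy0p.eq_of_length h2).symm)
            (fun h => hy0ne (Set.mem_singleton_iff.mpr h))
        · omega
      have hqpre : ∀ y : Vtx c,
          (⟨y.1.take (m + 1), vertexOK_prefix y.2 (List.take_prefix _ _)⟩ : Vtx c) = q →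
          q.1 <+: y.1 := by
        intro y h
        rw [← congrArg Subtype.val h]
        exact List.take_prefix _ _
      have hqlen : q.1.length = m + 1 := by
        rw [← congrArg Subtype.val hy0q]
        simp [List.length_take]
        omega
      have hpq : p.1 <+: q.1 :=
        List.prefix_of_prefix_length_le hy0p (hqpre y0 hy0q) (by omega)
      have hqC : q ∈ C := hpref y0 hy0C q (by omega) (hqpre y0 hy0q)
      refine ⟨q, ⟨hqC, by omega, Set.Infinite.mono ?_ hq⟩, hpq, hqlen⟩
      rintro a ⟨⟨⟨haC, -⟩, -⟩, haq⟩
      exact ⟨haC, hqpre a haq⟩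
    obtain ⟨p0, hp0⟩ := base
    obtain ⟨u, hu0, hu⟩ := chain_exists Inv (fun p => p.1.length)
      (fun p q => p.1 <+: q.1) p0 hp0 step
    set L0 : ℕ := p0.1.length with hL0
    have hxL0 : x.1.length < L0 := hp0.2.1
    have seq_len : ∀ n, (u n).1.length = L0 + n := by
      intro n
      induction n with
      | zero => rw [hu0, hL0, Nat.add_zero]
      | succ n ih =>
        rw [(hu n).2.2, ih]
        omega
    have seq_mono : ∀ m n, m ≤ n → (u m).1 <+: (u n).1 := by
      intro m n h
      induction n, h using Nat.le_induction with
      | base => exact List.prefix_refl _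
      | succ n hmn ih => exact ih.trans (hu n).2.1
    -- build the end
    set f : ℕ → ℕ := fun i => (u (i + 1)).1.getD i 0 with hfdef
    have getD_eq : ∀ n i, i < (u n).1.length → (u n).1.getD i 0 = f i := by
      intro n i hi
      rcases le_or_gt n (i + 1) with h | h
      · obtain ⟨t, ht⟩ := seq_mono n (i + 1) h
        show (u n).1.getD i 0 = (u (i + 1)).1.getD i 0
        rw [← ht, List.getD_append _ _ _ _ hi]
      · obtain ⟨t, ht⟩ := seq_mono (i + 1) n h.le
        have hi' : i < (u (i + 1)).1.length := by
          rw [seq_len]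
          omega
        show (u n).1.getD i 0 = (u (i + 1)).1.getD i 0
        rw [← ht, List.getD_append _ _ _ _ hi']
    have key : ∀ m n, n ≤ L0 + m → (List.ofFn fun i : Fin n => f i) = (u m).1.take n := by
      intro m n hn
      apply List.ext_getElem
      · simp [seq_len]
        omega
      · intro i h1 h2
        simp only [List.getElem_ofFn, List.getElem_take]
        have hi : i < (u m).1.length := by
          rw [seq_len]
          simp at h1
          omega
        rw [← getD_eq m i hi, List.getD_eq_getElem _ _ hi]
    have hfend : endOK c f := by
      intro n
      have h1 := key n n (by omega)
      show vertexOK c (List.ofFn fun i : Fin n => f i)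
      rw [h1]
      exact vertexOK_prefix (u n).2 (List.take_prefix _ _)
    set g : Ends c := ⟨f, hfend⟩ with hg
    have gpre : ∀ n m, n ≤ L0 + m → fnL g n <+: (u m).1 := by
      intro n m h
      have : fnL g n = (u m).1.take n := key m n h
      rw [this]
      exact List.take_prefix _ _
    -- `g` lies in `∂A = ∂B`
    have hCu : ∀ n, u n ∈ C := fun n => (hu n).1.1
    have hAB : {n : ℕ | u n ∈ A}.Infinite ∨ {n : ℕ | u n ∈ B}.Infinite := by
      by_contra h
      push_neg at h
      obtain ⟨h1, h2⟩ := h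
      have huniv : (Set.univ : Set ℕ) ⊆ {n : ℕ | u n ∈ A} ∪ {n : ℕ | u n ∈ B} := by
        intro n _
        have hmem := hCsub (hCu n)
        rw [Set.mem_symmDiff] at hmem
        rcases hmem with ⟨h', -⟩ | ⟨h', -⟩
        · exact Or.inl h'
        · exact Or.inr h'
      exact Set.infinite_univ ((h1.union h2).subset huniv)
    have hgA : g ∈ bdry c A := by
      rcases hAB with h' | h'
      · refine mem_bdry_iff.mpr fun n => ?_
        obtain ⟨m, hm, hm2⟩ := h'.exists_gt n
        exact ⟨u m, hm, gpre n m (by omega)⟩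
      · rw [hbd]
        refine mem_bdry_iff.mpr fun n => ?_
        obtain ⟨m, hm, hm2⟩ := h'.exists_gt n
        exact ⟨u m, hm, gpre n m (by omega)⟩
    have hgB : g ∈ bdry c B := by
      rw [← hbd]
      exact hgA
    have hgA' := mem_bdry_iff.mp hgA
    have hgB' := mem_bdry_iff.mp hgB
    obtain ⟨a0, ha0, -⟩ := hgA' 0
    obtain ⟨b0, hb0, -⟩ := hgB' 0
    set N : ℕ := max (max a0.1.length b0.1.length) L0 + 1 with hN
    have hvA : fnV g N ∈ A := side hA ha0 hgA' N (by omega)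
    have hvB : fnV g N ∈ B := side hB hb0 hgB' N (by omega)
    have hval : (fnV g N).1 = (u (N - L0)).1 := by
      show fnL g N = _
      have h1 : fnL g N = (u (N - L0)).1.take N := key (N - L0) N (by omega)
      rw [h1]
      exact List.take_of_length_le (by rw [seq_len]; omega)
    have hvC : fnV g N ∈ C := by
      rw [show fnV g N = u (N - L0) from Subtype.ext hval]
      exact hCu (N - L0)
    have hmem := hCsub hvC
    rw [Set.mem_symmDiff] at hmem
    rcases hmem with ⟨-, h⟩ | ⟨-, h⟩
    · exact h hvB
    · exact h hvA
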